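/- arXiv:math/0610816 — 2 statements merged into one kernel-verified Lean document; each statement's English description precedes it below -/
import Mathlib

section
/- Let N ≥ 1, let F_N be the free group on N generators x₁, …, x_N, let M be a unital complex algebra, α an action of F_N on M by algebra automorphisms, and E_M the canonical conditional expectation on M ⋊_α F_N. For each k ∈ {1, …, N} let A_k be the subalgebra of elements supported on the cyclic subgroup ⟨x_k⟩ generated by x_k. Then the family (A_k)_{k=1}^N is free with amalgamation over M with respect to E_M: for every n ≥ 1, every sequence of indices i₁, …, iₙ ∈ {1, …, N} with i_j ≠ i_{j+1} for 1 ≤ j < n, and every x_j ∈ A_{i_j} with E_M(x_j) = 0 for all j, one has E_M(x₁x₂⋯xₙ) = 0. (This is the freeness underlying M ⋊_α F_N = (M ⋊_α ℤ) *_M ⋯ *_M (M ⋊_α ℤ), N times.) -/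
open Finsupp

noncomputable section

variable {M : Type*} [Ring M] [Algebra ℂ M] {G : Type*} [Group G]

/-- The algebraic crossed product `M ⋊_α G`: finitely supported functions `G →₀ M`,
with multiplication determined by `(m u_g)(m' u_h) = (m · α_g(m')) u_{gh}`. -/
def CrossedProduct {M : Type*} [Ring M] [Algebra ℂ M] {G : Type*} [Group G]
    (_α : G →* (M ≃ₐ[ℂ] M)) : Type _ := G →₀ M

namespace CrossedProduct

variable (α : G →* (M ≃ₐ[ℂ] M))

/-- Reinterpret an element of the crossed product as a finitely supported function. -/
def toF (x : CrossedProduct α) : G →₀ M := x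

/-- Build an element of the crossed product from a finitely supported function. -/
def ofF (x : G →₀ M) : CrossedProduct α := x

instance : AddCommGroup (CrossedProduct α) := inferInstanceAs (AddCommGroup (G →₀ M))
instance : Module ℂ (CrossedProduct α) := inferInstanceAs (Module ℂ (G →₀ M))

@[simp] lemma toF_add (x y : CrossedProduct α) : toF α (x + y) = toF α x + toF α y := rfl
@[simp] lemma toF_zero : toF α (0 : CrossedProduct α) = 0 := rfl
@[simp] lemma toF_smul (c : ℂ) (x : CrossedProduct α) : toF α (c • x) = c • toF α x := rfl
@[simp] lemma ofF_add (f g : G →₀ M) : ofF α (f + g) = ofF α f + ofF α g := rfl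
lemma toF_injective : Function.Injective (toF α) := fun _ _ h => h
@[simp] lemma toF_ofF (f : G →₀ M) : toF α (ofF α f) = f := rfl
@[simp] lemma ofF_zero : ofF α (0 : G →₀ M) = 0 := rfl

instance : Mul (CrossedProduct α) :=
  ⟨fun x y => ofF α ((toF α x).sum fun g m => (toF α y).sum fun h n =>
      Finsupp.single (g * h) (m * α g n))⟩

lemma toF_mul (x y : CrossedProduct α) :
    toF α (x * y) = (toF α x).sum fun g m => (toF α y).sum fun h n =>
      Finsupp.single (g * h) (m * α g n) := rfl

instance : One (CrossedProduct α) := ⟨ofF α (Finsupp.single 1 1)⟩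

lemma toF_one : toF α (1 : CrossedProduct α) = Finsupp.single 1 1 := rfl

lemma ofF_single_mul (g h : G) (m n : M) :
    ofF α (Finsupp.single g m) * ofF α (Finsupp.single h n)
      = ofF α (Finsupp.single (g * h) (m * α g n)) := by
  apply toF_injective
  rw [toF_mul, toF_ofF, toF_ofF, toF_ofF]
  rw [Finsupp.sum_single_index (by simp), Finsupp.sum_single_index (by simp)]

private lemma mul_add' (x y z : CrossedProduct α) : x * (y + z) = x * y + x * z := by
  apply toF_injective
  rw [toF_add, toF_mul, toF_mul, toF_mul, ← Finsupp.sum_add]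
  refine Finsupp.sum_congr fun g _ => ?_
  rw [toF_add, Finsupp.sum_add_index' (fun h => by simp) (fun h n₁ n₂ => by
    simp [mul_add, Finsupp.single_add])]

private lemma add_mul' (x y z : CrossedProduct α) : (x + y) * z = x * z + y * z := by
  apply toF_injective
  rw [toF_add, toF_mul, toF_mul, toF_mul, toF_add]
  rw [Finsupp.sum_add_index' (fun g => by simp) (fun g m₁ m₂ => by
    rw [← Finsupp.sum_add]
    exact Finsupp.sum_congr fun h _ => by simp [add_mul, Finsupp.single_add])]

private lemma zero_mul' (x : CrossedProduct α) : 0 * x = 0 := by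
  apply toF_injective
  rw [toF_mul, toF_zero, Finsupp.sum_zero_index]

private lemma mul_zero' (x : CrossedProduct α) : x * 0 = 0 := by
  apply toF_injective
  rw [toF_mul, toF_zero]
  simp [Finsupp.sum_zero_index]

private lemma one_mul' (x : CrossedProduct α) : 1 * x = x := by
  apply toF_injective
  rw [toF_mul, toF_one, Finsupp.sum_single_index (by simp)]
  calc (toF α x).sum (fun h n => Finsupp.single ((1:G) * h) ((1:M) * (α 1) n))
      = (toF α x).sum (fun h n => Finsupp.single h n) :=
        Finsupp.sum_congr fun h _ => by simp
    _ = toF α x := Finsupp.sum_single _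

private lemma mul_one' (x : CrossedProduct α) : x * 1 = x := by
  apply toF_injective
  rw [toF_mul, toF_one]
  have : ∀ g : G, ∀ m : M,
      (Finsupp.single (1 : G) (1 : M)).sum (fun h n => Finsupp.single (g * h) (m * α g n))
        = Finsupp.single g m := by
    intro g m
    rw [Finsupp.sum_single_index (by simp)]
    simp
  calc (toF α x).sum (fun g m => (Finsupp.single (1:G) (1:M)).sum fun h n =>
          Finsupp.single (g * h) (m * α g n))
      = (toF α x).sum (fun g m => Finsupp.single g m) :=
        Finsupp.sum_congr fun g _ => this g _
    _ = toF α x := Finsupp.sum_single _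

private lemma mul_assoc' (x y z : CrossedProduct α) : x * y * z = x * (y * z) := by
  have hx : x = ofF α (toF α x) := rfl
  have hy : y = ofF α (toF α y) := rfl
  have hz : z = ofF α (toF α z) := rfl
  rw [hx, hy, hz]
  generalize (toF α x) = f
  generalize (toF α y) = g
  generalize (toF α z) = h
  induction f using Finsupp.induction_linear with
  | zero => rw [ofF_zero α, zero_mul' α, zero_mul' α, zero_mul' α]
  | add f₁ f₂ ih₁ ih₂ => rw [ofF_add, add_mul' α, add_mul' α, add_mul' α, ih₁, ih₂]
  | single a b =>
    induction g using Finsupp.induction_linear with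
    | zero => rw [ofF_zero α, mul_zero' α, zero_mul' α, mul_zero' α]
    | add g₁ g₂ ih₁ ih₂ => rw [ofF_add, mul_add' α, add_mul' α, add_mul' α, mul_add' α, ih₁, ih₂]
    | single c d =>
      induction h using Finsupp.induction_linear with
      | zero => rw [ofF_zero α, mul_zero' α, mul_zero' α, mul_zero' α]
      | add h₁ h₂ ih₁ ih₂ => rw [ofF_add, mul_add' α, mul_add' α, mul_add' α, ih₁, ih₂]
      | single e s =>
        rw [ofF_single_mul, ofF_single_mul, ofF_single_mul, ofF_single_mul]
        simp [mul_assoc, map_mul, AlgEquiv.mul_apply]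

instance : Ring (CrossedProduct α) where
  __ := (inferInstance : AddCommGroup (CrossedProduct α))
  left_distrib := mul_add' α
  right_distrib := fun a b c => add_mul' α a b c
  zero_mul := zero_mul' α
  mul_zero := mul_zero' α
  mul_assoc := mul_assoc' α
  one_mul := one_mul' α
  mul_one := mul_one' α

instance : Algebra ℂ (CrossedProduct α) :=
  Algebra.ofModule
    (fun c x y => by
      apply toF_injective
      simp only [toF_mul, toF_smul]
      rw [Finsupp.sum_smul_index' (fun g => by simp), Finsupp.smul_sum]
      refine Finsupp.sum_congr fun g _ => ?_
      rw [Finsupp.smul_sum]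
      exact Finsupp.sum_congr fun h _ => by
        rw [smul_mul_assoc, Finsupp.smul_single])
    (fun c x y => by
      apply toF_injective
      simp only [toF_mul, toF_smul]
      rw [Finsupp.smul_sum]
      refine Finsupp.sum_congr fun g _ => ?_
      rw [Finsupp.smul_sum, Finsupp.sum_smul_index' (fun h => by simp)]
      exact Finsupp.sum_congr fun h _ => by
        rw [map_smul, mul_smul_comm, Finsupp.smul_single])

/-- The element `m u_g` of the crossed product. -/
def single (g : G) (m : M) : CrossedProduct α := ofF α (Finsupp.single g m)

/-- The coefficient of `x ∈ M ⋊_α G` at a group element `g`. -/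
def coeff (x : CrossedProduct α) (g : G) : M := toF α x g

/-- The canonical conditional expectation `E_M : M ⋊_α G → M`, reading off
the coefficient at the group identity. -/
def E : CrossedProduct α →ₗ[ℂ] M where
  toFun x := coeff α x 1
  map_add' x y := by simp [coeff]
  map_smul' c x := by simp [coeff]

@[simp] lemma E_apply (x : CrossedProduct α) : E α x = coeff α x 1 := rfl

end CrossedProduct

/-- `suppIn α S x` : the element `x` of the crossed product is supported on the subset `S ⊆ G`. -/
def CrossedProduct.suppIn {M : Type*} [Ring M] [Algebra ℂ M] {G : Type*} [Group G]
    (α : G →* (M ≃ₐ[ℂ] M)) (S : Set G) (x : CrossedProduct α) : Prop :=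
  ∀ g : G, g ∉ S → CrossedProduct.coeff α x g = 0

namespace CrossedProduct

section SuppLemmas

variable {M : Type*} [Ring M] [Algebra ℂ M] {G : Type*} [Group G] (α : G →* (M ≃ₐ[ℂ] M))

lemma suppIn_mono {S T : Set G} (hST : S ⊆ T) {x : CrossedProduct α} (hx : suppIn α S x) :
    suppIn α T x := fun g hg => hx g fun h => hg (hST h)

open Pointwise in
lemma suppIn_mul {S T : Set G} {x y : CrossedProduct α} (hx : suppIn α S x)
    (hy : suppIn α T y) : suppIn α (S * T) (x * y) := by
  intro g hg
  show toF α (x * y) g = 0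
  rw [toF_mul, Finsupp.sum_apply]
  refine Finset.sum_eq_zero fun g₁ hg₁ => ?_
  dsimp only
  rw [Finsupp.sum_apply]
  refine Finset.sum_eq_zero fun g₂ hg₂ => ?_
  dsimp only
  have h1 : g₁ ∈ S := by
    by_contra h; exact Finsupp.mem_support_iff.mp hg₁ (hx g₁ h)
  have h2 : g₂ ∈ T := by
    by_contra h; exact Finsupp.mem_support_iff.mp hg₂ (hy g₂ h)
  exact Finsupp.single_eq_of_ne (fun hEq => hg (hEq ▸ Set.mul_mem_mul h1 h2))

lemma suppIn_one : suppIn α ({1} : Set G) (1 : CrossedProduct α) := by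
  intro g hg
  show toF α 1 g = 0
  rw [toF_one]
  exact Finsupp.single_eq_of_ne' (Ne.symm (by simpa using hg))

lemma suppIn_prod_ofFn : ∀ (n : ℕ) (S : Fin n → Set G) (x : Fin n → CrossedProduct α),
    (∀ j, suppIn α (S j) (x j)) →
    suppIn α {g | ∃ f : Fin n → G, (∀ j, f j ∈ S j) ∧ g = (List.ofFn f).prod}
      (List.ofFn x).prod
  | 0, S, x, _ => by
    simp only [List.ofFn_zero, List.prod_nil]
    refine suppIn_mono α ?_ (suppIn_one α)
    rintro g rfl
    exact ⟨Fin.elim0, fun j => j.elim0, by simp⟩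
  | (n + 1), S, x, hx => by
    rw [List.ofFn_succ, List.prod_cons]
    refine suppIn_mono α ?_ (suppIn_mul α (hx 0)
      (suppIn_prod_ofFn n (fun j => S j.succ) (fun j => x j.succ) (fun j => hx j.succ)))
    rintro g ⟨g₀, h₀, g', ⟨f, hf, rfl⟩, rfl⟩
    refine ⟨Fin.cons g₀ f, ?_, ?_⟩
    · intro j
      refine Fin.cases ?_ ?_ j
      · simpa using h₀
      · intro j; simpa using hf j
    · rw [List.ofFn_succ]
      simp

end SuppLemmas

open Monoid in
lemma coprodI_prod_ne_one {ι : Type*} [DecidableEq ι] {H : ι → Type*} [∀ i, Group (H i)]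
    [∀ i, DecidableEq (H i)] (l : List (Σ i, H i)) (hnil : l ≠ [])
    (hne : ∀ p ∈ l, p.2 ≠ 1) (hch : l.Chain' fun p q => p.1 ≠ q.1) :
    (l.map fun p => CoprodI.of p.2).prod ≠ 1 := by
  intro h
  set w : CoprodI.Word H := ⟨l, hne, hch⟩ with hwdef
  have h2 : CoprodI.Word.equiv.symm w = CoprodI.Word.equiv.symm CoprodI.Word.empty := by
    show w.prod = CoprodI.Word.empty.prod
    rw [CoprodI.Word.prod_empty]
    exact h
  have h3 := CoprodI.Word.equiv.symm.injective h2
  exact hnil (congrArg CoprodI.Word.toList h3)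

lemma freeGroupUnit_pow_ne_one (k : ℤ) (hk : k ≠ 0) :
    (FreeGroup.of () : FreeGroup Unit) ^ k ≠ 1 := by
  intro h
  apply hk
  have h2 := congrArg (FreeGroup.lift fun _ : Unit => (Multiplicative.ofAdd (1 : ℤ))) h
  simp only [map_zpow, FreeGroup.lift_apply_of, map_one] at h2
  simpa using congrArg Multiplicative.toAdd h2

lemma freeGroup_alternating_ne_one {N : ℕ} (n : ℕ) (hn : 1 ≤ n) (i : Fin n → Fin N)
    (halt : ∀ j : Fin n, (h : (j : ℕ) + 1 < n) → i j ≠ i ⟨(j : ℕ) + 1, h⟩)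
    (f : Fin n → FreeGroup (Fin N))
    (hf : ∀ j, f j ∈ Subgroup.zpowers (FreeGroup.of (i j)))
    (hf1 : ∀ j, f j ≠ 1) :
    (List.ofFn f).prod ≠ 1 := by
  classical
  choose k hk using fun j => Subgroup.mem_zpowers_iff.mp (hf j)
  have hk0 : ∀ j, k j ≠ 0 := by
    intro j hj
    apply hf1 j
    rw [← hk j, hj, zpow_zero]
  set g : Fin n → FreeGroup Unit := fun j => FreeGroup.of () ^ (k j) with hgdef
  have hg1 : ∀ j, g j ≠ 1 := fun j => freeGroupUnit_pow_ne_one (k j) (hk0 j)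
  have hφof : ∀ a : Fin N, freeGroupEquivCoprodI (FreeGroup.of a)
      = Monoid.CoprodI.of (M := fun _ : Fin N => FreeGroup Unit) (i := a) (FreeGroup.of ()) :=
    fun a => by simp
  have hφ : ∀ j, freeGroupEquivCoprodI (f j)
      = Monoid.CoprodI.of (M := fun _ : Fin N => FreeGroup Unit) (i := i j) (g j) := by
    intro j
    rw [← hk j, map_zpow, hφof, ← map_zpow]
  intro h
  have hmain := coprodI_prod_ne_one (H := fun _ : Fin N => FreeGroup Unit)
    (List.ofFn fun j => (⟨i j, g j⟩ : Σ _ : Fin N, FreeGroup Unit))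
    (by simp [List.ofFn_eq_nil_iff]; omega)
    (by
      intro p hp
      rw [List.mem_ofFn] at hp
      obtain ⟨j, rfl⟩ := hp
      exact hg1 j)
    (by
      refine List.isChain_ofFn.mpr ?_
      intro m hm
      exact halt ⟨m, Nat.lt_of_succ_lt hm⟩ hm)
  apply hmain
  have h1 : ((List.ofFn fun j => (⟨i j, g j⟩ : Σ _ : Fin N, FreeGroup Unit)).map
        fun p => Monoid.CoprodI.of (M := fun _ : Fin N => FreeGroup Unit) (i := p.1) p.2)
      = (List.ofFn f).map ⇑(freeGroupEquivCoprodI (ι := Fin N)) := by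
    rw [List.map_ofFn, List.map_ofFn]
    congr 1
    funext j
    exact (hφ j).symm
  rw [h1, ← map_list_prod (freeGroupEquivCoprodI (ι := Fin N)) (List.ofFn f), h, map_one]

end CrossedProduct

/-- for the free group `F_N` on generators `x₁, …, x_N`, the subalgebras `A_k` of
`M ⋊_α F_N` of elements supported on the cyclic subgroup `⟨x_k⟩` form a family which is free with
amalgamation over `M` with respect to `E_M`: every alternating product of `E_M`-centered
elements is `E_M`-centered. -/
theorem crossedProduct_freeGroup_amalgamatedFree {M : Type*} [Ring M] [Algebra ℂ M]
    (N : ℕ) (hN : 1 ≤ N) (α : FreeGroup (Fin N) →* (M ≃ₐ[ℂ] M))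
    (n : ℕ) (hn : 1 ≤ n) (i : Fin n → Fin N)
    (halt : ∀ j : Fin n, (h : (j : ℕ) + 1 < n) → i j ≠ i ⟨(j : ℕ) + 1, h⟩)
    (x : Fin n → CrossedProduct α)
    (hsupp : ∀ j, CrossedProduct.suppIn α
      ((Subgroup.zpowers (FreeGroup.of (i j)) : Subgroup (FreeGroup (Fin N))) : Set _) (x j))
    (hE : ∀ j, CrossedProduct.E α (x j) = 0) :
    CrossedProduct.E α (List.ofFn x).prod = 0 := by
  classical
  set S : Fin n → Set (FreeGroup (Fin N)) := fun j =>
    {g | g ∈ Subgroup.zpowers (FreeGroup.of (i j)) ∧ g ≠ 1} with hSdef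
  have hS : ∀ j, CrossedProduct.suppIn α (S j) (x j) := by
    intro j g hg
    by_cases h1 : g = 1
    · subst h1
      exact hE j
    · refine hsupp j g fun hmem => hg ⟨hmem, h1⟩
  have hprod := CrossedProduct.suppIn_prod_ofFn α n S x hS
  rw [CrossedProduct.E_apply]
  apply hprod
  rintro ⟨f, hf, hone⟩
  exact CrossedProduct.freeGroup_alternating_ne_one n hn i halt f
    (fun j => (hf j).1) (fun j => (hf j).2) hone.symm
end
end

section
/- Let G₁ and G₂ be groups and G = G₁ * G₂ their free product with canonical injections ι₁, ι₂. Equip the group algebra ℂ[G] with the canonical trace tr : ℂ[G] → ℂ sending ∑_g r_g g to r_e. For k = 1, 2 let B_k ⊆ ℂ[G] be the ℂ-linear span of ι_k(G_k) (a subalgebra isomorphic to ℂ[G_k]). Then B₁ and B₂ are freely independent with respect to tr: for every n ≥ 1, every sequence of indices i₁, …, iₙ ∈ {1,2} with i_j ≠ i_{j+1} for 1 ≤ j < n, and every y_j ∈ B_{i_j} with tr(y_j) = 0 for all j, one has tr(y₁y₂⋯yₙ) = 0. -/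
noncomputable section

/-- The canonical trace on the group algebra `ℂ[G]`, reading off the coefficient at the
group identity. -/
def groupAlgTrace (G : Type*) [Group G] : MonoidAlgebra ℂ G →ₗ[ℂ] ℂ where
  toFun x := x.coeff 1
  map_add' x y := Finsupp.add_apply x.coeff y.coeff 1
  map_smul' c x := Finsupp.smul_apply c x.coeff 1

open Monoid Pointwise

universe u v

section GroupPart

variable (G₁ : Type u) (G₂ : Type v) [Group G₁] [Group G₂]

/-- The two-element family of groups used to realize `G₁ ∗ G₂` as an indexed free product. -/
@[reducible] def coprodFam : Bool → Type (max u v) :=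
  fun b => cond b (ULift.{v} G₁) (ULift.{u} G₂)

instance coprodFamGroup : ∀ b, Group (coprodFam G₁ G₂ b) := fun b => by
  cases b
  · exact (inferInstance : Group (ULift G₂))
  · exact (inferInstance : Group (ULift G₁))

/-- The comparison map from the binary coproduct to the indexed free product. -/
def coprodToI : Coprod G₁ G₂ →* CoprodI (coprodFam G₁ G₂) :=
  Coprod.lift
    ((CoprodI.of (M := coprodFam G₁ G₂) (i := true)).comp
      (MulEquiv.ulift (α := G₁)).symm.toMonoidHom)
    ((CoprodI.of (M := coprodFam G₁ G₂) (i := false)).comp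
      (MulEquiv.ulift (α := G₂)).symm.toMonoidHom)

variable {G₁ G₂}

theorem neword_prod_ne_one' {ι : Type*} {M : ι → Type*} [∀ i, Monoid (M i)]
    {i j : ι} (w : CoprodI.NeWord M i j) : w.prod ≠ 1 := by
  classical
  intro h
  have h2 : w.toWord = CoprodI.Word.empty := by
    have := CoprodI.Word.equiv.right_inv w.toWord
    simp only [CoprodI.Word.equiv] at this
    rw [show w.toWord.prod = (1 : CoprodI M) from h] at this
    rw [← this, one_smul]
  exact w.toList_ne_nil (by rw [show w.toList = w.toWord.toList from rfl, h2]; rfl)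

/-- Build a nonempty reduced word from an alternating list. -/
theorem coprod_build {l : List (Coprod G₁ G₂)} {bs : List Bool}
    (h : List.Forall₂ (fun w b => w ≠ 1 ∧ cond b
      (w ∈ Set.range (Coprod.inl : G₁ →* Coprod G₁ G₂))
      (w ∈ Set.range (Coprod.inr : G₂ →* Coprod G₁ G₂))) l bs)
    (hch : bs.Chain' (· ≠ ·)) (hne : l ≠ []) :
    ∃ (b c : Bool) (v : CoprodI.NeWord (coprodFam G₁ G₂) b c),
      v.prod = coprodToI G₁ G₂ l.prod ∧ bs.head? = some b := by
  induction h with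
  | nil => exact absurd rfl hne
  | @cons w b l' bs' hwb h' ih =>
    have hletter : ∃ g : coprodFam G₁ G₂ b, g ≠ 1 ∧
        coprodToI G₁ G₂ w = CoprodI.of g := by
      cases b with
      | true =>
        obtain ⟨hw1, g, rfl⟩ := hwb
        refine ⟨ULift.up g, fun hg => hw1 ?_, by simp only [coprodToI,
          Coprod.lift_apply_inl, Coprod.lift_apply_inr, MonoidHom.comp_apply]; rfl⟩
        have : g = 1 := congrArg ULift.down hg
        rw [this, map_one]
      | false =>
        obtain ⟨hw1, g, rfl⟩ := hwb
        refine ⟨ULift.up g, fun hg => hw1 ?_, by simp only [coprodToI,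
          Coprod.lift_apply_inl, Coprod.lift_apply_inr, MonoidHom.comp_apply]; rfl⟩
        have : g = 1 := congrArg ULift.down hg
        rw [this, map_one]
    obtain ⟨g, hg1, hgw⟩ := hletter
    rcases h' with _ | @⟨w', b3, l'', bs'', hwb', h''⟩
    · refine ⟨b, b, CoprodI.NeWord.singleton g hg1, ?_, rfl⟩
      simp [hgw]
    · have ih' := ih (hch.tail) (by simp)
      obtain ⟨b2, c, v, hv, hhead⟩ := ih'
      have hb2 : b2 = b3 := by simpa using hhead.symm
      subst hb2
      have hbb : b ≠ b2 := (List.isChain_cons_cons.mp hch).1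
      refine ⟨b, c, CoprodI.NeWord.append (CoprodI.NeWord.singleton g hg1) hbb v, ?_, rfl⟩
      simp [hv, hgw]

theorem coprod_alt_prod_ne_one {l : List (Coprod G₁ G₂)} {bs : List Bool}
    (h : List.Forall₂ (fun w b => w ≠ 1 ∧ cond b
      (w ∈ Set.range (Coprod.inl : G₁ →* Coprod G₁ G₂))
      (w ∈ Set.range (Coprod.inr : G₂ →* Coprod G₁ G₂))) l bs)
    (hch : bs.Chain' (· ≠ ·)) (hne : l ≠ []) : l.prod ≠ 1 := by
  obtain ⟨b, c, v, hv, -⟩ := coprod_build h hch hne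
  intro h1
  rw [h1, map_one] at hv
  exact neword_prod_ne_one' v hv

end GroupPart

section AlgebraPart

variable {G : Type*} [Group G]

theorem list_prod_mem_span {l : List (MonoidAlgebra ℂ G)} {S : List (Set G)}
    (h : List.Forall₂ (fun z A => z ∈ Submodule.span ℂ
      (⇑(MonoidAlgebra.of ℂ G) '' A)) l S) :
    l.prod ∈ Submodule.span ℂ (⇑(MonoidAlgebra.of ℂ G) '' S.prod) := by
  induction h with
  | nil =>
    exact Submodule.subset_span ⟨1, Set.mem_one.mpr rfl, map_one _⟩
  | @cons z A l' S' hz h' ih =>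
    rw [List.prod_cons, List.prod_cons]
    have := Submodule.mul_mem_mul hz ih
    rwa [Submodule.span_mul_span, ← Set.image_mul (MonoidAlgebra.of ℂ G)] at this

theorem mem_list_prod_sets {S : List (Set G)} {w : G} (hw : w ∈ S.prod) :
    ∃ l : List G, List.Forall₂ (· ∈ ·) l S ∧ l.prod = w := by
  induction S generalizing w with
  | nil => exact ⟨[], List.Forall₂.nil, (Set.mem_one.mp hw).symm⟩
  | cons A S' ih =>
    rw [List.prod_cons] at hw
    obtain ⟨a, ha, b, hb, rfl⟩ := Set.mem_mul.mp hw
    obtain ⟨l, hl, rfl⟩ := ih hb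
    exact ⟨a :: l, List.Forall₂.cons ha hl, List.prod_cons⟩

theorem centered_mem_span {K : Set G} {y : MonoidAlgebra ℂ G}
    (hy : y ∈ Submodule.span ℂ (⇑(MonoidAlgebra.of ℂ G) '' K)) (h1 : y.coeff 1 = 0) :
    y ∈ Submodule.span ℂ (⇑(MonoidAlgebra.of ℂ G) '' (K \ {1})) := by
  have himg : ∀ T : Set G, ⇑(MonoidAlgebra.of ℂ G) '' T =
      (fun g => MonoidAlgebra.single g (1 : ℂ)) '' T := by
    intro T; rfl
  rw [himg, ← MonoidAlgebra.supported_eq_span_single] at hy ⊢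
  rw [MonoidAlgebra.mem_supported] at hy ⊢
  intro g hg
  refine ⟨hy hg, ?_⟩
  simp only [Set.mem_singleton_iff]
  rintro rfl
  exact (Finsupp.mem_support_iff.mp hg) h1

theorem forall₂_ofFn {α β : Type*} {R : α → β → Prop} {n : ℕ} {f : Fin n → α}
    {g : Fin n → β} (h : ∀ j, R (f j) (g j)) :
    List.Forall₂ R (List.ofFn f) (List.ofFn g) := by
  induction n with
  | zero => simp
  | succ m ih =>
    rw [List.ofFn_succ, List.ofFn_succ]
    exact List.Forall₂.cons (h 0) (ih fun j => h j.succ)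

theorem chain'_ofFn {α : Type*} {R : α → α → Prop} {n : ℕ} {f : Fin n → α}
    (h : ∀ (k : ℕ) (hk : k + 1 < n), R (f ⟨k, Nat.lt_of_succ_lt hk⟩) (f ⟨k+1, hk⟩)) :
    (List.ofFn f).Chain' R := by
  refine List.isChain_iff_getElem.mpr ?_
  intro k hk
  rw [List.getElem_ofFn, List.getElem_ofFn]
  have hk' : k + 1 < n := by simp only [List.length_ofFn] at hk; omega
  exact h k hk'

end AlgebraPart

/-- in the group algebra `ℂ[G₁ * G₂]` with its canonical trace, the subalgebras
`B₁ = span ι₁(G₁)` and `B₂ = span ι₂(G₂)` are freely independent: every alternating product of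
trace-centered elements has trace `0`. -/
theorem groupAlgebra_coprod_freelyIndependent {G₁ G₂ : Type*} [Group G₁] [Group G₂]
    (n : ℕ) (hn : 1 ≤ n) (i : Fin n → Fin 2)
    (halt : ∀ j : Fin n, (h : (j : ℕ) + 1 < n) → i j ≠ i ⟨(j : ℕ) + 1, h⟩)
    (y : Fin n → MonoidAlgebra ℂ (Monoid.Coprod G₁ G₂))
    (hmem : ∀ j, y j ∈ Submodule.span ℂ
      (⇑(MonoidAlgebra.of ℂ (Monoid.Coprod G₁ G₂)) ''
        (if i j = 0
          then Set.range ⇑(Monoid.Coprod.inl : G₁ →* Monoid.Coprod G₁ G₂)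
          else Set.range ⇑(Monoid.Coprod.inr : G₂ →* Monoid.Coprod G₁ G₂))))
    (htr : ∀ j, groupAlgTrace (Monoid.Coprod G₁ G₂) (y j) = 0) :
    groupAlgTrace (Monoid.Coprod G₁ G₂) (List.ofFn y).prod = 0 := by
  classical
  set Kb : Bool → Set (Monoid.Coprod G₁ G₂) := fun b =>
    (cond b (Set.range (Monoid.Coprod.inl : G₁ →* Monoid.Coprod G₁ G₂))
      (Set.range (Monoid.Coprod.inr : G₂ →* Monoid.Coprod G₁ G₂))) \ {1} with hKbdef
  set bfun : Fin n → Bool := fun j => decide (i j = 0) with hbfun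
  have hKb : ∀ j, ((if i j = 0
      then Set.range ⇑(Monoid.Coprod.inl : G₁ →* Monoid.Coprod G₁ G₂)
      else Set.range ⇑(Monoid.Coprod.inr : G₂ →* Monoid.Coprod G₁ G₂)) \ {1})
        = Kb (bfun j) := by
    intro j
    by_cases h : i j = 0 <;> simp [hKbdef, hbfun, h]
  have hy' : ∀ j, y j ∈ Submodule.span ℂ
      (⇑(MonoidAlgebra.of ℂ (Monoid.Coprod G₁ G₂)) '' (Kb (bfun j))) := by
    intro j
    rw [← hKb]
    exact centered_mem_span (hmem j) (htr j)
  have hprod : (List.ofFn y).prod ∈ Submodule.span ℂ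
      (⇑(MonoidAlgebra.of ℂ (Monoid.Coprod G₁ G₂)) ''
        (List.ofFn (fun j => Kb (bfun j))).prod) :=
    list_prod_mem_span (forall₂_ofFn hy')
  -- every element of this set product is a nontrivial group element
  have hW : ∀ w ∈ (List.ofFn (fun j => Kb (bfun j))).prod,
      w ≠ (1 : Monoid.Coprod G₁ G₂) := by
    intro w hw
    obtain ⟨l, hl, rfl⟩ := mem_list_prod_sets hw
    have hl' : List.Forall₂ (fun w b => w ∈ Kb b) l (List.ofFn bfun) := by
      rw [show List.ofFn (fun j => Kb (bfun j)) = (List.ofFn bfun).map Kb from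
        (List.map_ofFn (f := bfun) (g := Kb)).symm] at hl
      exact List.forall₂_map_right_iff.mp hl
    have hok : List.Forall₂ (fun w b => w ≠ 1 ∧ cond b
        (w ∈ Set.range (Monoid.Coprod.inl : G₁ →* Monoid.Coprod G₁ G₂))
        (w ∈ Set.range (Monoid.Coprod.inr : G₂ →* Monoid.Coprod G₁ G₂)))
        l (List.ofFn bfun) := by
      refine hl'.imp ?_
      intro a b hab
      cases b <;>
        exact ⟨fun h1 => hab.2 (Set.mem_singleton_iff.mpr h1), hab.1⟩
    have hch : (List.ofFn bfun).Chain' (· ≠ ·) := by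
      apply chain'_ofFn
      intro k hk
      have h2 : ∀ a b : Fin 2, a ≠ b → decide (a = 0) ≠ decide (b = 0) := by decide
      exact h2 _ _ (halt ⟨k, Nat.lt_of_succ_lt hk⟩ hk)
    have hlen : l ≠ [] := by
      have hln := hl'.length_eq
      simp only [List.length_ofFn] at hln
      intro h
      rw [h] at hln
      simp at hln
      omega
    exact coprod_alt_prod_ne_one hok hch hlen
  -- conclude: the trace kills the span of nontrivial group elements
  have hker : Submodule.span ℂ
      (⇑(MonoidAlgebra.of ℂ (Monoid.Coprod G₁ G₂)) ''
        (List.ofFn (fun j => Kb (bfun j))).prod) ≤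
      LinearMap.ker (groupAlgTrace (Monoid.Coprod G₁ G₂)) := by
    rw [Submodule.span_le]
    rintro _ ⟨w, hwW, rfl⟩
    rw [SetLike.mem_coe, LinearMap.mem_ker]
    show (MonoidAlgebra.of ℂ (Monoid.Coprod G₁ G₂) w).coeff 1 = 0
    rw [MonoidAlgebra.of_apply, MonoidAlgebra.coeff_single]
    exact Finsupp.single_eq_of_ne (hW w hwW).symm
  exact LinearMap.mem_ker.mp (hker hprod)
end
end
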